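/- Geometric-series lower bound for the Green's function: for a finite Markov chain, a state Δ, and T, L > 0 with L ≤ T, letting R_T(Δ) = Σ_{s=0}^T P^s(Δ,Δ) and p = P(τ_Δ⁺ ≤ L | X_0 = Δ) (return to Δ within L steps), one has R_T(Δ) ≥ Σ_{i=0}^{⌊T/L⌋} p^i, and R_T(Δ) ≤ (1 − P(τ_Δ⁺ ≤ T | X_0 = Δ))^{-1}. -/

import Mathlib

open Finset

private lemma mat_tele {V : Type*} [Fintype V] [DecidableEq V]
    (P Q : Matrix V V ℝ) (t : ℕ) :
    P ^ t = Q ^ t + ∑ r ∈ Finset.range t, Q ^ r * (P - Q) * P ^ (t - 1 - r) := by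
  induction t with
  | zero => simp
  | succ t ih =>
    have h1 : ∑ r ∈ Finset.range (t + 1), Q ^ r * (P - Q) * P ^ (t + 1 - 1 - r)
        = (∑ r ∈ Finset.range t, Q ^ r * (P - Q) * P ^ (t - 1 - r)) * P
          + Q ^ t * (P - Q) := by
      rw [Finset.sum_range_succ, Finset.sum_mul]
      congr 1
      · refine Finset.sum_congr rfl fun r hr => ?_
        rw [Finset.mem_range] at hr
        rw [mul_assoc _ _ P, ← pow_succ]
        congr 2
        omega
      · simp
    rw [pow_succ, ih, h1, pow_succ]
    noncomm_ring

private lemma pow_entry_nonneg {V : Type*} [Fintype V] [DecidableEq V]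
    (M : Matrix V V ℝ) (h : ∀ x y, 0 ≤ M x y) (k : ℕ) (x y : V) :
    0 ≤ (M ^ k) x y := by
  induction k generalizing x y with
  | zero =>
    simp only [pow_zero]
    rcases eq_or_ne x y with rfl | hne
    · simp [Matrix.one_apply]
    · simp [Matrix.one_apply, hne]
  | succ k ih =>
    rw [pow_succ, Matrix.mul_apply]
    exact Finset.sum_nonneg fun z _ => mul_nonneg (ih x z) (h z y)

/-- Geometric-series bounds for the Green's function of a finite Markov chain.  Let `P`
be a stochastic matrix on a finite state space, `Δ` a state, and let
`R_T(Δ) = Σ_{s=0}^T P^s(Δ,Δ)`.  The distribution of the first return time to `Δ` is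
`P(τ_Δ⁺ = r | X_0 = Δ) = (Q^{r-1}·P)(Δ,Δ)`, where `Q` is `P` with the column of `Δ`
zeroed out (the walk killed upon hitting `Δ`); write `p_L = P(τ_Δ⁺ ≤ L | X_0 = Δ)`.
Then for `1 ≤ L ≤ T`:  `R_T(Δ) ≥ Σ_{i=0}^{⌊T/L⌋} p_L^i`, and, provided
`P(τ_Δ⁺ ≤ T | X_0 = Δ) < 1`, also `R_T(Δ) ≤ (1 − P(τ_Δ⁺ ≤ T | X_0 = Δ))⁻¹`. -/
theorem voter_rrg_stmt17
    {V : Type*} [Fintype V] [DecidableEq V]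
    (P : Matrix V V ℝ)
    (hPnn : ∀ x y, 0 ≤ P x y) (hProw : ∀ x, ∑ y, P x y = 1)
    (Δ : V) (T L : ℕ) (hL : 1 ≤ L) (hLT : L ≤ T)
    (Q : Matrix V V ℝ) (hQ : ∀ x y, Q x y = if y = Δ then 0 else P x y)
    (ret : ℕ → ℝ) (hret : ∀ r, ret r = (Q ^ (r - 1) * P) Δ Δ)
    (p : ℕ → ℝ) (hp : ∀ l, p l = ∑ r ∈ Finset.Icc 1 l, ret r)
    (R : ℕ → ℝ) (hR : ∀ t, R t = ∑ s ∈ Finset.range (t + 1), (P ^ s) Δ Δ)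
    (hpT : p T < 1) :
    (∑ i ∈ Finset.range (T / L + 1), (p L) ^ i) ≤ R T ∧
    R T ≤ (1 - p T)⁻¹ := by
  -- basic nonnegativity facts
  have hQnn : ∀ x y, 0 ≤ Q x y := by
    intro x y; rw [hQ]; split
    · exact le_refl 0
    · exact hPnn x y
  have hPpow : ∀ k (x y : V), 0 ≤ (P ^ k) x y := pow_entry_nonneg P hPnn
  have hQpow : ∀ k (x y : V), 0 ≤ (Q ^ k) x y := pow_entry_nonneg Q hQnn
  have hretnn : ∀ r, 0 ≤ ret r := by
    intro r
    rw [hret, Matrix.mul_apply]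
    exact Finset.sum_nonneg fun z _ => mul_nonneg (hQpow _ _ _) (hPnn z Δ)
  have hpnn : ∀ l, 0 ≤ p l := fun l =>
    (hp l) ▸ Finset.sum_nonneg fun r _ => hretnn r
  -- p l as a sum over range l
  have hpr : ∀ l, p l = ∑ r ∈ Finset.range l, ret (r + 1) := by
    intro l
    rw [hp, ← Finset.Ico_add_one_right_eq_Icc, Finset.sum_Ico_eq_sum_range]
    simp [add_comm]
  -- Q^t Δ Δ = 0 for t ≥ 1 (Q has zero column at Δ)
  have hQcol : ∀ x, Q x Δ = 0 := by intro x; rw [hQ]; simp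
  have hQzero : ∀ t, 1 ≤ t → (Q ^ t) Δ Δ = 0 := by
    intro t ht
    obtain ⟨s, rfl⟩ := Nat.exists_eq_add_of_le ht
    rw [add_comm, pow_succ, Matrix.mul_apply]
    exact Finset.sum_eq_zero fun z _ => by rw [hQcol z, mul_zero]
  -- key: entries of M * (P - Q) * N at (Δ, Δ)
  have hterm : ∀ M N : Matrix V V ℝ, (M * (P - Q) * N) Δ Δ = (M * P) Δ Δ * N Δ Δ := by
    intro M N
    rw [Matrix.mul_apply]
    have h1 : ∀ w, (M * (P - Q)) Δ w = if w = Δ then (M * P) Δ Δ else 0 := by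
      intro w
      rcases eq_or_ne w Δ with rfl | hw
      · rw [if_pos rfl, Matrix.mul_apply, Matrix.mul_apply]
        refine Finset.sum_congr rfl fun z _ => ?_
        rw [Matrix.sub_apply, hQcol z, sub_zero]
      · rw [if_neg hw, Matrix.mul_apply]
        refine Finset.sum_eq_zero fun z _ => ?_
        rw [Matrix.sub_apply, hQ, if_neg hw]
        simp
    rw [Finset.sum_congr rfl fun w _ => by rw [h1 w]]
    simp
  -- renewal for P^(t+1)
  have hstep : ∀ t, (P ^ (t + 1)) Δ Δ
      = ∑ r ∈ Finset.range (t + 1), ret (r + 1) * (P ^ (t - r)) Δ Δ := by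
    intro t
    have := congrArg (fun M : Matrix V V ℝ => M Δ Δ) (mat_tele P Q (t + 1))
    simp only [Matrix.add_apply] at this
    rw [this, hQzero (t + 1) (by omega), zero_add, Matrix.sum_apply]
    refine Finset.sum_congr rfl fun r hr => ?_
    rw [Finset.mem_range] at hr
    have : t + 1 - 1 - r = t - r := by omega
    rw [this, hterm, hret]
    simp
  -- renewal identity for R
  have hR0 : R 0 = 1 := by rw [hR]; simp
  have hren : ∀ t, R t = 1 + ∑ r ∈ Finset.range t, ret (r + 1) * R (t - 1 - r) := by
    intro t
    induction t with
    | zero => simpa using hR0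
    | succ t ih =>
      have hRsucc : R (t + 1) = R t + (P ^ (t + 1)) Δ Δ := by
        rw [hR, hR, Finset.sum_range_succ]
      rw [hRsucc, ih, hstep t, Finset.sum_range_succ, Finset.sum_range_succ]
      have harith : ∀ r ∈ Finset.range t,
          ret (r + 1) * R (t - 1 - r) + ret (r + 1) * (P ^ (t - r)) Δ Δ
          = ret (r + 1) * R (t + 1 - 1 - r) := by
        intro r hr
        rw [Finset.mem_range] at hr
        have h1 : t + 1 - 1 - r = t - r := by omega
        have h2 : R (t - r) = R (t - 1 - r) + (P ^ (t - r)) Δ Δ := by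
          have h3 : t - r = (t - 1 - r) + 1 := by omega
          rw [hR, hR, h3, Finset.sum_range_succ]
        rw [h1, h2, mul_add]
      have h4 : t + 1 - 1 - t = 0 := by omega
      have h5 : (P ^ (t - t)) Δ Δ = 1 := by
        rw [Nat.sub_self, pow_zero, Matrix.one_apply_eq]
      have hsum : ∑ r ∈ Finset.range t, ret (r + 1) * R (t + 1 - 1 - r)
          = ∑ r ∈ Finset.range t,
              (ret (r + 1) * R (t - 1 - r) + ret (r + 1) * (P ^ (t - r)) Δ Δ) :=
        Finset.sum_congr rfl fun r hr => (harith r hr).symm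
      rw [hsum, Finset.sum_add_distrib, h4, h5, hR0]
      ring
  -- R is monotone
  have hmono : ∀ a b, a ≤ b → R a ≤ R b := by
    intro a b hab
    rw [hR, hR]
    exact Finset.sum_le_sum_of_subset_of_nonneg
      (Finset.range_subset_range.mpr (by omega)) (fun s _ _ => hPpow s Δ Δ)
  have hR1 : ∀ t, 1 ≤ R t := fun t => hR0 ▸ hmono 0 t (Nat.zero_le t)
  constructor
  · -- lower bound
    have hkey : ∀ t, L ≤ t → 1 + p L * R (t - L) ≤ R t := by
      intro t ht
      rw [hren t, hpr L, Finset.sum_mul]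
      have h1 : ∑ r ∈ Finset.range L, ret (r + 1) * R (t - L)
          ≤ ∑ r ∈ Finset.range L, ret (r + 1) * R (t - 1 - r) := by
        refine Finset.sum_le_sum fun r hr => ?_
        rw [Finset.mem_range] at hr
        exact mul_le_mul_of_nonneg_left (hmono _ _ (by omega)) (hretnn _)
      have h2 : ∑ r ∈ Finset.range L, ret (r + 1) * R (t - 1 - r)
          ≤ ∑ r ∈ Finset.range t, ret (r + 1) * R (t - 1 - r) := by
        refine Finset.sum_le_sum_of_subset_of_nonneg
          (Finset.range_subset_range.mpr ht) fun r _ _ => ?_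
        exact mul_nonneg (hretnn _) (le_trans zero_le_one (hR1 _))
      linarith
    have hgeo : ∀ n t, n * L ≤ t →
        (∑ i ∈ Finset.range (n + 1), (p L) ^ i) ≤ R t := by
      intro n
      induction n with
      | zero => intro t _; simpa using hR1 t
      | succ n ih =>
        intro t ht
        have ht' : n * L + L ≤ t := by rwa [Nat.succ_mul] at ht
        have hLt : L ≤ t := by omega
        have h1 : n * L ≤ t - L := by omega
        have h2 := ih (t - L) h1
        have h3 := hkey t hLt
        have h4 : (∑ i ∈ Finset.range (n + 1 + 1), (p L) ^ i)
            = 1 + p L * ∑ i ∈ Finset.range (n + 1), (p L) ^ i := by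
          rw [Finset.sum_range_succ']
          simp only [pow_succ, pow_zero]
          rw [← Finset.sum_mul]
          ring
        rw [h4]
        nlinarith [hpnn L, mul_le_mul_of_nonneg_left h2 (hpnn L)]
    exact hgeo (T / L) T (Nat.div_mul_le_self T L)
  · -- upper bound
    have h1 : R T ≤ 1 + p T * R T := by
      have e := hren T
      have hle : ∑ r ∈ Finset.range T, ret (r + 1) * R (T - 1 - r)
          ≤ ∑ r ∈ Finset.range T, ret (r + 1) * R T := by
        refine Finset.sum_le_sum fun r hr => ?_
        exact mul_le_mul_of_nonneg_left (hmono _ _ (by omega)) (hretnn _)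
      have e2 : p T * R T = ∑ r ∈ Finset.range T, ret (r + 1) * R T := by
        rw [hpr T, Finset.sum_mul]
      linarith
    have h2 : 0 < 1 - p T := by linarith
    have h3 : R T * (1 - p T) ≤ 1 := by nlinarith
    have h4 : R T ≤ 1 / (1 - p T) := (le_div_iff₀ h2).mpr h3
    rwa [one_div] at h4
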